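/- Let Y be a set and consider the dissipative multiplicative flow ψ_c(y,u) = (y, u + ln c) on Y × ℝ. Suppose g : (0,∞) × (Y × ℝ) → ℝ, written g_c(y,u), satisfies g_{c1c2}(y,u) = g_{c1}(y,u)/c2 + g_{c2}(y, u + ln c1) for all c1, c2 > 0 and all (y,u) ∈ Y × ℝ. Then there exists a function g* : Y × ℝ → ℝ such that g_c(y,u) = g*(y, u + ln c) − c^{-1} g*(y,u) for all c > 0 and all (y,u) ∈ Y × ℝ. -/
import Mathlib


/-- for the dissipative flow `ψ_c(y,u) = (y, u + ln c)` on `Y × ℝ`,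
every solution of the 1-semi-additive functional equation
`g_{c1c2}(y,u) = g_{c1}(y,u)/c2 + g_{c2}(y, u + ln c1)` is of the form
`g_c(y,u) = g*(y, u + ln c) − c⁻¹ g*(y,u)`. -/
theorem stmt16 {Y : Type*}
    (g : ℝ → Y × ℝ → ℝ)
    (hg : ∀ c1 c2 : ℝ, 0 < c1 → 0 < c2 → ∀ (y : Y) (u : ℝ),
      g (c1 * c2) (y, u) = g c1 (y, u) / c2 + g c2 (y, u + Real.log c1)) :
    ∃ gstar : Y × ℝ → ℝ, ∀ c : ℝ, 0 < c → ∀ (y : Y) (u : ℝ),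
      g c (y, u) = gstar (y, u + Real.log c) - c⁻¹ * gstar (y, u) := by
  refine ⟨fun p => -Real.exp (-p.2) * g (Real.exp (-p.2)) p, ?_⟩
  intro c hc y u
  have key := hg c (c⁻¹ * Real.exp (-u)) hc (by positivity) y u
  have h1 : c * (c⁻¹ * Real.exp (-u)) = Real.exp (-u) := by
    field_simp
  have h2 : Real.exp (-(u + Real.log c)) = c⁻¹ * Real.exp (-u) := by
    rw [Real.exp_neg, Real.exp_add, Real.exp_log hc, Real.exp_neg, mul_inv]
    ring
  rw [h1] at key
  simp only [h2]
  have hce : (0:ℝ) < c⁻¹ * Real.exp (-u) := by positivity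
  have hepos : (0:ℝ) < Real.exp (-u) := Real.exp_pos _
  field_simp at key ⊢
  nlinarith [key, mul_pos hc hepos]
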